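/- Let ⟨X, ⊕_p⟩ be a convex algebra and ⪯ a partial order on X satisfying (MO), and let x, y ∈ X with x ⪯ y. Then the map Γ_{x,y} : [0,1] → X defined by Γ_{x,y}(t) = y ⊕_t x is nondecreasing, and either Γ_{x,y} is strictly increasing (in particular injective), or the restriction of Γ_{x,y} to (0,1) is constant. -/

import Mathlib

open Set Filter Topology

/-- A convex algebra on a set `X`: `op p x y` denotes `x ⊕_p y`, for `p ∈ (0,1)`,
extended to `p ∈ [0,1]` by the projection axioms `x ⊕_1 y = x` and `x ⊕_0 y = y`. -/
structure ConvexAlg (X : Type*) where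
  op : ℝ → X → X → X
  idem : ∀ p ∈ Set.Ioo (0:ℝ) 1, ∀ x : X, op p x x = x
  comm : ∀ p ∈ Set.Ioo (0:ℝ) 1, ∀ x y : X, op p x y = op (1 - p) y x
  assoc : ∀ p ∈ Set.Ioo (0:ℝ) 1, ∀ q ∈ Set.Ioo (0:ℝ) 1, ∀ x y z : X,
      op q (op p x y) z = op (p * q) x (op ((1 - p) * q / (1 - p * q)) y z)
  proj1 : ∀ x y : X, op 1 x y = x
  proj0 : ∀ x y : X, op 0 x y = y

/-- `y ⊳ x` : `y` eats `x`, i.e. `y ⊕_t x = y` for all `t ∈ (0,1]`. -/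
def ConvexAlg.Eats {X : Type*} (A : ConvexAlg X) (y x : X) : Prop :=
  ∀ t ∈ Set.Ioc (0:ℝ) 1, A.op t y x = y

section Aux

variable {X : Type*}

lemma cvx_ratio_mem {p q : ℝ} (hp : p ∈ Set.Ioo (0:ℝ) 1) (hq : q ∈ Set.Ioo (0:ℝ) 1) :
    (1 - p) * q / (1 - p * q) ∈ Set.Ioo (0:ℝ) 1 := by
  obtain ⟨hp0, hp1⟩ := hp
  obtain ⟨hq0, hq1⟩ := hq
  have hpq : p * q < 1 := by nlinarith
  constructor
  · exact div_pos (by nlinarith) (by linarith)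
  · rw [div_lt_one (by linarith)]
    nlinarith

lemma cvx_key (A : ConvexAlg X) {p q : ℝ} (hp : p ∈ Set.Ioo (0:ℝ) 1)
    (hq : q ∈ Set.Ioo (0:ℝ) 1) (b a : X) :
    A.op q (A.op p b a) a = A.op (p * q) b a := by
  rw [A.assoc p hp q hq b a a, A.idem _ (cvx_ratio_mem hp hq) a]

lemma cvx_step1 (A : ConvexAlg X) {s t : ℝ} (hs : s ∈ Set.Ioo (0:ℝ) 1)
    (ht : t ∈ Set.Ioo (0:ℝ) 1) (b a : X) (h : A.op s b a = A.op t b a) :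
    ∀ q ∈ Set.Ioc (0:ℝ) 1, A.op (s * q) b a = A.op (t * q) b a := by
  intro q hq
  rcases eq_or_lt_of_le hq.2 with h1 | h1
  · rw [h1, mul_one, mul_one]; exact h
  · have hq' : q ∈ Set.Ioo (0:ℝ) 1 := ⟨hq.1, h1⟩
    rw [← cvx_key A hs hq' b a, ← cvx_key A ht hq' b a, h]

lemma cvx_geom (A : ConvexAlg X) {s t : ℝ} (hs : s ∈ Set.Ioo (0:ℝ) 1)
    (ht : t ∈ Set.Ioo (0:ℝ) 1) (hst : s < t) (b a : X)
    (h : A.op s b a = A.op t b a) :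
    ∀ n : ℕ, A.op (t * (s / t) ^ n) b a = A.op t b a := by
  intro n
  induction n with
  | zero => simp
  | succ n ih =>
      have ht0 : (0:ℝ) < t := ht.1
      have hdiv : (0:ℝ) < s / t := div_pos hs.1 ht0
      have hdiv1 : s / t < 1 := (div_lt_one ht0).2 hst
      have hq : (s / t) ^ n ∈ Set.Ioc (0:ℝ) 1 :=
        ⟨pow_pos hdiv n, pow_le_one₀ hdiv.le hdiv1.le⟩
      have e : t * (s / t) ^ (n + 1) = s * (s / t) ^ n := by
        have htne : t ≠ 0 := ne_of_gt ht0
        field_simp [pow_succ]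
        have hts : t * (s / t) = s := by field_simp
        rw [pow_succ, mul_comm ((s / t) ^ n), ← mul_assoc, hts]
      rw [e, cvx_step1 A hs ht b a h _ hq]
      exact ih

variable [PartialOrder X]

lemma cvx_lb (A : ConvexAlg X)
    (hMO : ∀ x x' y : X, ∀ p ∈ Set.Ioo (0:ℝ) 1, x ≤ x' → A.op p x y ≤ A.op p x' y)
    {x y : X} (hxy : x ≤ y) {t : ℝ} (ht : t ∈ Set.Ioo (0:ℝ) 1) :
    x ≤ A.op t y x := by
  have h := hMO x y x t ht hxy
  rwa [A.idem t ht x] at h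

lemma cvx_ub (A : ConvexAlg X)
    (hMO : ∀ x x' y : X, ∀ p ∈ Set.Ioo (0:ℝ) 1, x ≤ x' → A.op p x y ≤ A.op p x' y)
    {x y : X} (hxy : x ≤ y) {t : ℝ} (ht : t ∈ Set.Ioo (0:ℝ) 1) :
    A.op t y x ≤ y := by
  have h1 : (1 - t) ∈ Set.Ioo (0:ℝ) 1 := ⟨by linarith [ht.2], by linarith [ht.1]⟩
  have h := hMO x y y (1 - t) h1 hxy
  rw [A.idem _ h1 y] at h
  calc A.op t y x = A.op (1 - t) x y := A.comm t ht y x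
    _ ≤ y := h

lemma cvx_mono (A : ConvexAlg X)
    (hMO : ∀ x x' y : X, ∀ p ∈ Set.Ioo (0:ℝ) 1, x ≤ x' → A.op p x y ≤ A.op p x' y)
    {x y : X} (hxy : x ≤ y) :
    MonotoneOn (fun t => A.op t y x) (Set.Icc (0:ℝ) 1) := by
  intro a ha b hb hab
  rcases eq_or_lt_of_le hab with rfl | hlt
  · exact le_rfl
  simp only
  rcases eq_or_lt_of_le ha.1 with ha0 | ha0
  · rw [← ha0, A.proj0]
    rcases eq_or_lt_of_le hb.2 with hb1 | hb1
    · rw [hb1, A.proj1]; exact hxy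
    · exact cvx_lb A hMO hxy ⟨by rw [← ha0] at hlt; exact hlt, hb1⟩
  · have haI : a ∈ Set.Ioo (0:ℝ) 1 := ⟨ha0, lt_of_lt_of_le hlt hb.2⟩
    rcases eq_or_lt_of_le hb.2 with hb1 | hb1
    · rw [hb1, A.proj1]; exact cvx_ub A hMO hxy haI
    · have hbI : b ∈ Set.Ioo (0:ℝ) 1 := ⟨lt_trans ha0 hlt, hb1⟩
      have hq : a / b ∈ Set.Ioo (0:ℝ) 1 := ⟨div_pos ha0 hbI.1, (div_lt_one hbI.1).2 hlt⟩
      have e : A.op a y x = A.op (a / b) (A.op b y x) x := by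
        rw [cvx_key A hbI hq y x]
        congr 1
        rw [mul_comm]; exact (div_mul_cancel₀ a (ne_of_gt hbI.1)).symm
      rw [e]
      set z := A.op b y x with hz
      have hxz : x ≤ z := cvx_lb A hMO hxy hbI
      have h1 : (1 - a / b) ∈ Set.Ioo (0:ℝ) 1 := ⟨by linarith [hq.2], by linarith [hq.1]⟩
      calc A.op (a / b) z x = A.op (1 - a / b) x z := A.comm _ hq z x
        _ ≤ A.op (1 - a / b) z z := hMO x z z _ h1 hxz
        _ = z := A.idem _ h1 z

lemma cvx_const_of_eq (A : ConvexAlg X)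
    (hMO : ∀ x x' y : X, ∀ p ∈ Set.Ioo (0:ℝ) 1, x ≤ x' → A.op p x y ≤ A.op p x' y)
    {x y : X} (hxy : x ≤ y) {s t : ℝ} (hs : s ∈ Set.Ioo (0:ℝ) 1)
    (ht : t ∈ Set.Ioo (0:ℝ) 1) (hst : s < t)
    (heq : A.op s y x = A.op t y x) :
    ∀ u ∈ Set.Ioo (0:ℝ) 1, A.op u y x = A.op t y x := by
  have hmono := cvx_mono A hMO hxy
  intro u hu
  have huI : u ∈ Set.Icc (0:ℝ) 1 := ⟨hu.1.le, hu.2.le⟩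
  have htI : t ∈ Set.Icc (0:ℝ) 1 := ⟨ht.1.le, ht.2.le⟩
  rcases le_or_gt u t with hut | htu
  · obtain ⟨n, hn⟩ := exists_pow_lt_of_lt_one (div_pos hu.1 ht.1) ((div_lt_one ht.1).2 hst)
    set p0 := t * (s / t) ^ n with hp0
    have hp0u : p0 < u := by
      calc p0 < t * (u / t) := mul_lt_mul_of_pos_left hn ht.1
        _ = u := by rw [mul_comm]; exact div_mul_cancel₀ u (ne_of_gt ht.1)
    have hp0pos : 0 < p0 := mul_pos ht.1 (pow_pos (div_pos hs.1 ht.1) n)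
    have hg := cvx_geom A hs ht hst y x heq n
    have h1 : A.op p0 y x ≤ A.op u y x :=
      hmono ⟨hp0pos.le, by linarith [hu.2]⟩ huI hp0u.le
    have h2 : A.op u y x ≤ A.op t y x := hmono huI htI hut
    exact le_antisymm h2 (hg ▸ h1)
  · have hs' : (1 - t) ∈ Set.Ioo (0:ℝ) 1 := ⟨by linarith [ht.2], by linarith [ht.1]⟩
    have ht' : (1 - s) ∈ Set.Ioo (0:ℝ) 1 := ⟨by linarith [hs.2], by linarith [hs.1]⟩
    have hst' : 1 - t < 1 - s := by linarith
    have heq' : A.op (1 - t) x y = A.op (1 - s) x y := by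
      rw [← A.comm t ht y x, ← A.comm s hs y x]
      exact heq.symm
    have hu2 : (0:ℝ) < 1 - u := by linarith [hu.2]
    have hs2 : (0:ℝ) < 1 - s := by linarith [hs.2]
    have ht2 : (0:ℝ) < 1 - t := by linarith [ht.2]
    have harg1 : (0:ℝ) < (1 - u) / (1 - s) := div_pos hu2 hs2
    have harg2 : (1 - t) / (1 - s) < 1 := (div_lt_one hs2).2 hst'
    obtain ⟨n, hn⟩ := exists_pow_lt_of_lt_one harg1 harg2
    set w := (1 - s) * ((1 - t) / (1 - s)) ^ n with hw
    have hwlt : w < 1 - u := by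
      calc w < (1 - s) * ((1 - u) / (1 - s)) := mul_lt_mul_of_pos_left hn hs2
        _ = 1 - u := by rw [mul_comm]; exact div_mul_cancel₀ _ (ne_of_gt hs2)
    have hwpos : 0 < w :=
      mul_pos (by linarith [hs.2]) (pow_pos (div_pos (by linarith [ht.2]) (by linarith [hs.2])) n)
    have hg := cvx_geom A hs' ht' hst' x y heq' n
    set v := 1 - w with hv
    have hvI : v ∈ Set.Ioo (0:ℝ) 1 := ⟨by linarith [hu.1], by linarith⟩
    have hGv : A.op v y x = A.op t y x := by
      have c1 : A.op v y x = A.op w x y := by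
        rw [A.comm v hvI y x]
        congr 1
        rw [hv]; ring
      rw [c1, hg, ← A.comm s hs y x, heq]
    have h1 : A.op t y x ≤ A.op u y x := hmono htI huI htu.le
    have h2 : A.op u y x ≤ A.op v y x :=
      hmono huI ⟨by linarith [hvI.1], hvI.2.le⟩ (by linarith)
    exact le_antisymm (hGv ▸ h2) h1

end Aux

/-- Corollary 2.10: if `⟨X, ⊕_p⟩` is a convex algebra with a partial order satisfying (MO)
and `x ⪯ y`, then the map `Γ_{x,y} : t ↦ y ⊕_t x` is nondecreasing on `[0,1]`, and either
it is strictly increasing on `[0,1]` (in particular injective), or its restriction to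
`(0,1)` is constant. -/
theorem stmt_1 {X : Type*} [PartialOrder X] (A : ConvexAlg X)
    (hMO : ∀ x x' y : X, ∀ p ∈ Set.Ioo (0:ℝ) 1, x ≤ x' → A.op p x y ≤ A.op p x' y)
    (x y : X) (hxy : x ≤ y) :
    MonotoneOn (fun t => A.op t y x) (Set.Icc (0:ℝ) 1) ∧
    (StrictMonoOn (fun t => A.op t y x) (Set.Icc (0:ℝ) 1) ∨
      ∀ s ∈ Set.Ioo (0:ℝ) 1, ∀ t ∈ Set.Ioo (0:ℝ) 1, A.op s y x = A.op t y x) := by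
  have hmono := cvx_mono A hMO hxy
  refine ⟨hmono, ?_⟩
  by_cases hC : ∀ s ∈ Set.Ioo (0:ℝ) 1, ∀ t ∈ Set.Ioo (0:ℝ) 1, A.op s y x = A.op t y x
  · exact Or.inr hC
  · refine Or.inl ?_
    intro a ha b hb hab
    have hle : A.op a y x ≤ A.op b y x := hmono ha hb hab.le
    rcases lt_or_eq_of_le hle with h | h
    · exact h
    · exfalso
      -- Γ a = Γ b with a < b; produce two interior points where Γ agrees
      set s := a + (b - a) / 3 with hsdef
      set t := a + (b - a) / 2 with htdef
      have hsI : s ∈ Set.Ioo (0:ℝ) 1 := by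
        constructor
        · have := ha.1; rw [hsdef]; linarith
        · have := hb.2; rw [hsdef]; linarith
      have htI : t ∈ Set.Ioo (0:ℝ) 1 := by
        constructor
        · have := ha.1; rw [htdef]; linarith
        · have := hb.2; rw [htdef]; linarith
      have hst : s < t := by rw [hsdef, htdef]; linarith
      have hsIcc : s ∈ Set.Icc (0:ℝ) 1 := ⟨hsI.1.le, hsI.2.le⟩
      have htIcc : t ∈ Set.Icc (0:ℝ) 1 := ⟨htI.1.le, htI.2.le⟩
      have has : a ≤ s := by rw [hsdef]; linarith
      have htb : t ≤ b := by rw [htdef]; linarith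
      have hstle : s ≤ t := hst.le
      have e1 : A.op a y x ≤ A.op s y x := hmono ha hsIcc has
      have e2 : A.op s y x ≤ A.op t y x := hmono hsIcc htIcc hstle
      have e3 : A.op t y x ≤ A.op b y x := hmono htIcc hb htb
      have heq : A.op s y x = A.op t y x := by
        rw [← h] at e3
        exact le_antisymm e2 (e3.trans e1)
      have hconst := cvx_const_of_eq A hMO hxy hsI htI hst heq
      apply hC
      intro s' hs' t' ht'
      rw [hconst s' hs', hconst t' ht']
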